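/- Let m be a positive integer and x_1, …, x_m real numbers. Then the sum over all m-tuples of nonnegative integers (r_1,…,r_m) with r_1 + 2r_2 + … + m·r_m = m of m!/(r_1!·1^{r_1} · r_2!·2^{r_2} ⋯ r_m!·m^{r_m}) · x_1^{r_1} x_2^{r_2} ⋯ x_m^{r_m} equals m! times the coefficient of y^m in the formal power series exp( ∑_{r=1}^{m} (x_r/r) y^r ). -/

import Mathlib

open Finset PowerSeries

/-- The finite set of `m`-tuples `(r 0, …, r (m-1))` of nonnegative integers
(thought of as `(r_1, …, r_m)`) satisfying `r_1 + 2 r_2 + ⋯ + m r_m = m`.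
Any such tuple has all entries `≤ m`, so restricting each entry to
`Finset.range (m+1)` loses nothing. -/
def partitionTuples (m : ℕ) : Finset (Fin m → ℕ) :=
  (Fintype.piFinset fun _ : Fin m => Finset.range (m + 1)).filter
    fun r => ∑ i : Fin m, ((i : ℕ) + 1) * r i = m

/-- The formal exponential `exp f = ∑_{j≥0} f^j / j!` of a power series `f`
with zero constant term: since `f` has zero constant coefficient, the
coefficient of `y^m` in `∑_{j≥0} f^j / j!` only receives contributions from
`j ≤ m`. -/
noncomputable def expPS (f : PowerSeries ℝ) : PowerSeries ℝ :=
  PowerSeries.mk fun m =>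
    ∑ j ∈ Finset.range (m + 1), PowerSeries.coeff (R := ℝ) m (f ^ j) / j.factorial

/-- **Lemma 4 (first claim).** For a positive integer `m` and reals
`x_1, …, x_m` (here `x i = x_{i+1}` for `i : Fin m`),
`∑_{r_1+2r_2+⋯+m r_m = m} m!/(r_1! 1^{r_1} ⋯ r_m! m^{r_m}) x_1^{r_1} ⋯ x_m^{r_m}`
equals `m!` times the coefficient of `y^m` in `exp (∑_{r=1}^m (x_r/r) y^r)`. -/
theorem partition_sum_eq_factorial_mul_coeff_exp (m : ℕ) (hm : 0 < m)
    (x : Fin m → ℝ) :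
    ∑ r ∈ partitionTuples m,
        ((m.factorial : ℝ) /
            ∏ i : Fin m, (((r i).factorial : ℝ) * ((i : ℕ) + 1) ^ (r i))) *
          ∏ i : Fin m, (x i) ^ (r i) =
      (m.factorial : ℝ) *
        PowerSeries.coeff (R := ℝ) m
          (expPS (∑ i : Fin m,
            PowerSeries.C (R := ℝ) (x i / ((i : ℕ) + 1)) * PowerSeries.X ^ ((i : ℕ) + 1))) := by
  classical
  set a : Fin m → ℝ := fun i => x i / ((i : ℕ) + 1) with ha
  have key : ∀ j : ℕ,
      PowerSeries.coeff (R := ℝ) m ((∑ i : Fin m, PowerSeries.C (R := ℝ) (a i) * PowerSeries.X ^ ((i:ℕ)+1)) ^ j)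
      = ∑ k ∈ Finset.piAntidiag Finset.univ j,
          if ∑ i : Fin m, ((i:ℕ)+1) * k i = m then
            (Nat.multinomial Finset.univ k : ℝ) * ∏ i, a i ^ k i else 0 := by
    intro j
    rw [Finset.sum_pow_eq_sum_piAntidiag, map_sum]
    refine Finset.sum_congr rfl fun k hk => ?_
    have h1 : ∀ i : Fin m, (PowerSeries.C (R := ℝ) (a i) * PowerSeries.X ^ ((i:ℕ)+1)) ^ k i
        = PowerSeries.C (R := ℝ) (a i ^ k i) * PowerSeries.X ^ (((i:ℕ)+1) * k i) := by
      intro i; rw [mul_pow, ← map_pow, ← pow_mul]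
    simp_rw [h1, Finset.prod_mul_distrib, ← map_prod, Finset.prod_pow_eq_pow_sum]
    rw [← map_natCast (PowerSeries.C (R := ℝ)) (Nat.multinomial Finset.univ k),
      PowerSeries.coeff_C_mul, PowerSeries.coeff_C_mul, PowerSeries.coeff_X_pow]
    simp [mul_comm, eq_comm]
  rw [expPS, PowerSeries.coeff_mk]
  change _ = _ * ∑ j ∈ Finset.range (m + 1), PowerSeries.coeff (R := ℝ) m ((∑ i : Fin m, PowerSeries.C (R := ℝ) (a i) * PowerSeries.X ^ ((i:ℕ)+1)) ^ j) / (j.factorial : ℝ)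
  simp_rw [key, Finset.sum_div, Finset.mul_sum, ite_div, zero_div, mul_ite, mul_zero]
  rw [Finset.sum_sigma', ← Finset.sum_filter]
  refine (Finset.sum_nbij' (i := fun r => (⟨∑ i, r i, r⟩ : Σ _ : ℕ, Fin m → ℕ))
    (j := fun p => p.2) ?_ ?_ ?_ ?_ ?_).symm.symm
  · -- maps into filtered sigma
    intro r hr
    simp only [partitionTuples, Finset.mem_filter, Fintype.mem_piFinset, Finset.mem_range] at hr
    obtain ⟨-, hsum⟩ := hr
    have hle : ∑ i, r i ≤ m := by
      calc ∑ i, r i ≤ ∑ i : Fin m, ((i:ℕ)+1) * r i :=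
            Finset.sum_le_sum fun i _ => Nat.le_mul_of_pos_left _ (Nat.succ_pos _)
        _ = m := hsum
    simp only [Finset.mem_filter, Finset.mem_sigma, Finset.mem_range, Finset.mem_piAntidiag]
    exact ⟨⟨Nat.lt_succ_of_le hle, by simp⟩, hsum⟩
  · -- inverse maps into partitionTuples
    intro p hp
    simp only [Finset.mem_filter, Finset.mem_sigma, Finset.mem_range, Finset.mem_piAntidiag] at hp
    obtain ⟨⟨hj, hsum, -⟩, hP⟩ := hp
    simp only [partitionTuples, Finset.mem_filter, Fintype.mem_piFinset, Finset.mem_range]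
    refine ⟨fun i => Nat.lt_succ_of_le ?_, hP⟩
    calc p.2 i ≤ ((i:ℕ)+1) * p.2 i := Nat.le_mul_of_pos_left _ (Nat.succ_pos _)
      _ ≤ ∑ i : Fin m, ((i:ℕ)+1) * p.2 i := Finset.single_le_sum (f := fun i : Fin m => ((i:ℕ)+1) * p.2 i) (fun i _ => Nat.zero_le _) (Finset.mem_univ i)
      _ = m := hP
  · intro r hr; rfl
  · intro p hp
    simp only [Finset.mem_filter, Finset.mem_sigma, Finset.mem_range, Finset.mem_piAntidiag] at hp
    obtain ⟨⟨hj, hsum, -⟩, hP⟩ := hp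
    exact Sigma.ext hsum (heq_of_eq rfl)
  · -- term equality
    intro r hr
    simp only [partitionTuples, Finset.mem_filter, Fintype.mem_piFinset, Finset.mem_range] at hr
    set j := ∑ i, r i with hj
    have hmult : ((∏ i, (r i).factorial : ℕ) : ℝ) * (Nat.multinomial Finset.univ r : ℝ)
        = (j.factorial : ℝ) := by
      exact_mod_cast congrArg (Nat.cast : ℕ → ℝ) (Nat.multinomial_spec Finset.univ r)
    have hB : (∏ i : Fin m, (((i:ℕ)+1 : ℝ)) ^ (r i)) ≠ 0 := by positivity
    have hA : ((∏ i, (r i).factorial : ℕ) : ℝ) ≠ 0 := by positivity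
    have hJ : ((j.factorial : ℕ) : ℝ) ≠ 0 := by positivity
    have haprod : ∏ i, a i ^ r i
        = (∏ i, x i ^ r i) / ∏ i : Fin m, (((i:ℕ)+1 : ℝ)) ^ (r i) := by
      simp_rw [ha, div_pow]; rw [Finset.prod_div_distrib]
    have hprod : ∏ i : Fin m, (((r i).factorial : ℝ) * ((i : ℕ) + 1) ^ (r i))
        = ((∏ i, (r i).factorial : ℕ) : ℝ) * ∏ i : Fin m, (((i:ℕ)+1 : ℝ)) ^ (r i) := by
      rw [Finset.prod_mul_distrib]; push_cast; ring
    dsimp only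
    rw [haprod, hprod]
    push_cast at hmult hA ⊢
    field_simp
    linear_combination (-(∏ i, x i ^ r i)) * hmult
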